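/- Cross-term identity for mixed updates: With X₁ (m×n₁, mean x̄₁), Y_u (m×k_u, mean ȳ_u), Y_d (m×k_d, mean ȳ_d) where Y_d consists of columns of X₁, X_u = [X₁ Y_u] with mean x̄_u, and X₂ the matrix obtained by removing Y_d from X_u with mean x̄₂, the outer-product identity k_u·(ȳ_u − x̄₁)(x̄_u − x̄₂)ᵀ = k_d·(x̄_u − x̄₁)(ȳ_d − x̄₂)ᵀ holds. -/

import Mathlib

open Matrix

/-- Cross-term outer-product identity for mixed covariance updates. -/
theorem mixed_cross_term_identity {m n₁ ku kd : ℕ}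
    (hku : 1 ≤ ku) (hkd : 1 ≤ kd) (hn₁ : 1 ≤ n₁) (hn₂ : kd ≤ n₁ + ku - 1)
    (X₁ : Matrix (Fin m) (Fin n₁) ℝ) (J : Finset (Fin n₁)) (hJ : J.card = kd)
    (Yd : Matrix (Fin m) {j // j ∈ J} ℝ) (hYd : Yd = X₁.submatrix id Subtype.val)
    (Yu : Matrix (Fin m) (Fin ku) ℝ)
    (Xu : Matrix (Fin m) (Fin n₁ ⊕ Fin ku) ℝ) (hXu : Xu = Matrix.fromCols X₁ Yu)
    (X₂ : Matrix (Fin m) ({j // j ∉ J} ⊕ Fin ku) ℝ)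
    (hX₂ : X₂ = Matrix.fromCols (X₁.submatrix id Subtype.val) Yu)
    (xbar₁ xbaru xbar₂ ybaru ybard : Fin m → ℝ)
    (hxbar₁ : ∀ i, xbar₁ i = (∑ j, X₁ i j) / (n₁ : ℝ))
    (hxbaru : ∀ i, xbaru i = (∑ j, Xu i j) / ((n₁ : ℝ) + ku))
    (hxbar₂ : ∀ i, xbar₂ i = (∑ j, X₂ i j) / ((n₁ : ℝ) + ku - kd))
    (hybaru : ∀ i, ybaru i = (∑ j, Yu i j) / (ku : ℝ))
    (hybard : ∀ i, ybard i = (∑ j, Yd i j) / (kd : ℝ)) :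
    (ku : ℝ) • Matrix.vecMulVec (fun i => ybaru i - xbar₁ i) (fun i => xbaru i - xbar₂ i) =
      (kd : ℝ) • Matrix.vecMulVec (fun i => xbaru i - xbar₁ i) (fun i => ybard i - xbar₂ i) := by
  -- nonzero denominators
  have hn₁' : (0 : ℝ) < (n₁ : ℝ) := by exact_mod_cast hn₁
  have hku' : (0 : ℝ) < (ku : ℝ) := by exact_mod_cast hku
  have hkd' : (0 : ℝ) < (kd : ℝ) := by exact_mod_cast hkd
  have hN : (0 : ℝ) < (n₁ : ℝ) + ku := by linarith
  have hkd_lt : kd < n₁ + ku := by omega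
  have hN2 : (0 : ℝ) < (n₁ : ℝ) + ku - kd := by
    have : (kd : ℝ) < (n₁ : ℝ) + ku := by exact_mod_cast hkd_lt
    linarith
  -- sums
  have hSu : ∀ i, (∑ j, Xu i j) = (∑ j, X₁ i j) + ∑ j, Yu i j := by
    intro i
    simp [hXu, Matrix.fromCols, Fintype.sum_sum_type]
  have hSd : ∀ i, (∑ j, Yd i j) = ∑ j ∈ J, X₁ i j := by
    intro i
    rw [hYd]
    exact (Finset.sum_subtype J (fun x => Iff.rfl) (fun j => X₁ i j)).symm
  have hS2 : ∀ i, (∑ j, X₂ i j) =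
      ((∑ j, X₁ i j) - ∑ j ∈ J, X₁ i j) + ∑ j, Yu i j := by
    intro i
    rw [hX₂]
    have h1 : (∑ j : {j // j ∉ J}, X₁ i j) = ∑ j ∈ Jᶜ, X₁ i j := by
      exact (Finset.sum_subtype Jᶜ (fun x => Finset.mem_compl) (fun j => X₁ i j)).symm
    have h2 : (∑ j ∈ Jᶜ, X₁ i j) + ∑ j ∈ J, X₁ i j = ∑ j, X₁ i j := by
      rw [Finset.sum_compl_add_sum]
    simp only [Fintype.sum_sum_type, Matrix.fromCols_apply_inl,
      Matrix.fromCols_apply_inr, Matrix.submatrix_apply, id_eq]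
    rw [h1]
    linarith
  -- key scalar identities
  have h1 : ∀ i, (ku : ℝ) * (ybaru i - xbar₁ i)
      = ((n₁ : ℝ) + ku) * (xbaru i - xbar₁ i) := by
    intro i
    rw [hybaru, hxbar₁, hxbaru, hSu]
    field_simp
    ring
  have h2 : ∀ i, (kd : ℝ) * (ybard i - xbar₂ i)
      = ((n₁ : ℝ) + ku) * (xbaru i - xbar₂ i) := by
    intro i
    rw [hybard, hxbar₂, hxbaru, hSu, hS2, hSd]
    field_simp
    ring
  ext i j
  simp only [Matrix.smul_apply, Matrix.vecMulVec_apply, smul_eq_mul]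
  have e1 := h1 i
  have e2 := h2 j
  linear_combination (xbaru j - xbar₂ j) * e1 - (xbaru i - xbar₁ i) * e2
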